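/- Let M ∈ [0, 1] and β₀, β₁, β₂ ∈ ℝ with β₁ > 0 and β₂ > 0, and set m₃ = √(1+M), m₄ = √(1−M). Then the vector ξ_g = (√3·m₃m₄/4, m₃²/2, −√2·m₃m₄/4, m₄²/2, √3·m₃m₄/4) belongs to S_C(M), satisfies τ(ξ_g) = 0 and δ(ξ_g) = 0, and minimizes E_U over S_C(M): E_U(ξ_g) ≤ E_U(ξ) for all ξ ∈ S_C(M), with minimum value E_U(ξ_g) = (1/2)(β₀ + β₁M²). -/

import Mathlib

noncomputable section

/-- τ for complex 5-vectors (ξ₂, ξ₁, ξ₀, ξ₋₁, ξ₋₂). -/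
def tauC (z2 z1 z0 zm1 zm2 : ℂ) : ℂ :=
  2 * ((starRingEnd ℂ) z2 * z1 + (starRingEnd ℂ) zm1 * zm2)
    + (Real.sqrt 6 : ℂ) * ((starRingEnd ℂ) z1 * z0 + (starRingEnd ℂ) z0 * zm1)

/-- δ for complex 5-vectors. -/
def deltaC (z2 z1 z0 zm1 zm2 : ℂ) : ℂ :=
  2 * z2 * zm2 - 2 * z1 * zm1 + z0 ^ 2

/-- F_z for complex 5-vectors. -/
def FzC (z2 z1 z0 zm1 zm2 : ℂ) : ℝ :=
  2 * (‖z2‖ ^ 2 - ‖zm2‖ ^ 2)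
    + ‖z1‖ ^ 2 - ‖zm1‖ ^ 2

/-- Membership in S_C(M): mass and magnetization constraints. -/
def memSC (M : ℝ) (z2 z1 z0 zm1 zm2 : ℂ) : Prop :=
  ‖z2‖ ^ 2 + ‖z1‖ ^ 2 + ‖z0‖ ^ 2
      + ‖zm1‖ ^ 2 + ‖zm2‖ ^ 2 = 1 ∧
  2 * ‖z2‖ ^ 2 + ‖z1‖ ^ 2
      - ‖zm1‖ ^ 2 - 2 * ‖zm2‖ ^ 2 = M

/-- The uniform energy E_U. -/
def EU (b0 b1 b2 M : ℝ) (z2 z1 z0 zm1 zm2 : ℂ) : ℝ :=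
  (1 / 2) * (b1 * ‖tauC z2 z1 z0 zm1 zm2‖ ^ 2
    + (b2 / 5) * ‖deltaC z2 z1 z0 zm1 zm2‖ ^ 2
    + b0 + b1 * M ^ 2)

theorem stmt12 (M b0 b1 b2 : ℝ) (hM0 : 0 ≤ M) (hM1 : M ≤ 1)
    (hb1 : 0 < b1) (hb2 : 0 < b2)
    (m3 m4 : ℝ) (hm3 : m3 = Real.sqrt (1 + M)) (hm4 : m4 = Real.sqrt (1 - M)) :
    memSC M ((Real.sqrt 3 * m3 * m4 / 4 : ℝ) : ℂ) ((m3 ^ 2 / 2 : ℝ) : ℂ)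
        ((-(Real.sqrt 2 * m3 * m4 / 4) : ℝ) : ℂ) ((m4 ^ 2 / 2 : ℝ) : ℂ)
        ((Real.sqrt 3 * m3 * m4 / 4 : ℝ) : ℂ) ∧
    tauC ((Real.sqrt 3 * m3 * m4 / 4 : ℝ) : ℂ) ((m3 ^ 2 / 2 : ℝ) : ℂ)
        ((-(Real.sqrt 2 * m3 * m4 / 4) : ℝ) : ℂ) ((m4 ^ 2 / 2 : ℝ) : ℂ)
        ((Real.sqrt 3 * m3 * m4 / 4 : ℝ) : ℂ) = 0 ∧
    deltaC ((Real.sqrt 3 * m3 * m4 / 4 : ℝ) : ℂ) ((m3 ^ 2 / 2 : ℝ) : ℂ)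
        ((-(Real.sqrt 2 * m3 * m4 / 4) : ℝ) : ℂ) ((m4 ^ 2 / 2 : ℝ) : ℂ)
        ((Real.sqrt 3 * m3 * m4 / 4 : ℝ) : ℂ) = 0 ∧
    (∀ z2 z1 z0 zm1 zm2 : ℂ, memSC M z2 z1 z0 zm1 zm2 →
      EU b0 b1 b2 M ((Real.sqrt 3 * m3 * m4 / 4 : ℝ) : ℂ) ((m3 ^ 2 / 2 : ℝ) : ℂ)
          ((-(Real.sqrt 2 * m3 * m4 / 4) : ℝ) : ℂ) ((m4 ^ 2 / 2 : ℝ) : ℂ)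
          ((Real.sqrt 3 * m3 * m4 / 4 : ℝ) : ℂ)
        ≤ EU b0 b1 b2 M z2 z1 z0 zm1 zm2) ∧
    EU b0 b1 b2 M ((Real.sqrt 3 * m3 * m4 / 4 : ℝ) : ℂ) ((m3 ^ 2 / 2 : ℝ) : ℂ)
        ((-(Real.sqrt 2 * m3 * m4 / 4) : ℝ) : ℂ) ((m4 ^ 2 / 2 : ℝ) : ℂ)
        ((Real.sqrt 3 * m3 * m4 / 4 : ℝ) : ℂ)
      = (1 / 2) * (b0 + b1 * M ^ 2) := by
  have h3 : m3 ^ 2 = 1 + M := by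
    rw [hm3, Real.sq_sqrt]; linarith
  have h4 : m4 ^ 2 = 1 - M := by
    rw [hm4, Real.sq_sqrt]; linarith
  have h32 : Real.sqrt 3 ^ 2 = 3 := Real.sq_sqrt (by norm_num)
  have h22 : Real.sqrt 2 ^ 2 = 2 := Real.sq_sqrt (by norm_num)
  have h62 : Real.sqrt 6 * Real.sqrt 2 = 2 * Real.sqrt 3 := by
    rw [← Real.sqrt_mul (by norm_num)]
    rw [show (6 : ℝ) * 2 = 2 ^ 2 * 3 by norm_num, Real.sqrt_mul (by positivity),
      Real.sqrt_sq (by norm_num)]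
  have hmem : memSC M ((Real.sqrt 3 * m3 * m4 / 4 : ℝ) : ℂ) ((m3 ^ 2 / 2 : ℝ) : ℂ)
      ((-(Real.sqrt 2 * m3 * m4 / 4) : ℝ) : ℂ) ((m4 ^ 2 / 2 : ℝ) : ℂ)
      ((Real.sqrt 3 * m3 * m4 / 4 : ℝ) : ℂ) := by
    have hx3 : (Real.sqrt 3 * m3 * m4 / 4) ^ 2 = 3 * (m3 * m4) ^ 2 / 16 := by
      rw [show (Real.sqrt 3 * m3 * m4 / 4) ^ 2
          = Real.sqrt 3 ^ 2 * (m3 * m4) ^ 2 / 16 from by ring, h32]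
    have hx2 : (-(Real.sqrt 2 * m3 * m4 / 4)) ^ 2 = 2 * (m3 * m4) ^ 2 / 16 := by
      rw [show (-(Real.sqrt 2 * m3 * m4 / 4)) ^ 2
          = Real.sqrt 2 ^ 2 * (m3 * m4) ^ 2 / 16 from by ring, h22]
    constructor
    · simp only [Complex.norm_real, Real.norm_eq_abs, sq_abs]
      rw [hx3, hx2]
      linear_combination ((m3 ^ 2 + m4 ^ 2 + 2) / 4) * h3 + ((m3 ^ 2 + m4 ^ 2 + 2) / 4) * h4
    · simp only [Complex.norm_real, Real.norm_eq_abs, sq_abs]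
      rw [hx3]
      linear_combination ((m3 ^ 2 + 1 + M) / 4) * h3 - ((m4 ^ 2 + 1 - M) / 4) * h4
  have htau : tauC ((Real.sqrt 3 * m3 * m4 / 4 : ℝ) : ℂ) ((m3 ^ 2 / 2 : ℝ) : ℂ)
      ((-(Real.sqrt 2 * m3 * m4 / 4) : ℝ) : ℂ) ((m4 ^ 2 / 2 : ℝ) : ℂ)
      ((Real.sqrt 3 * m3 * m4 / 4 : ℝ) : ℂ) = 0 := by
    unfold tauC
    simp only [Complex.conj_ofReal, ← Complex.ofReal_mul, ← Complex.ofReal_add,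
      ← Complex.ofReal_ofNat]
    norm_cast
    linear_combination (-(m3 * m4 * (m3 ^ 2 + m4 ^ 2) / 8)) * h62
  have hdel : deltaC ((Real.sqrt 3 * m3 * m4 / 4 : ℝ) : ℂ) ((m3 ^ 2 / 2 : ℝ) : ℂ)
      ((-(Real.sqrt 2 * m3 * m4 / 4) : ℝ) : ℂ) ((m4 ^ 2 / 2 : ℝ) : ℂ)
      ((Real.sqrt 3 * m3 * m4 / 4 : ℝ) : ℂ) = 0 := by
    unfold deltaC
    norm_cast
    linear_combination (2 * (m3 * m4 / 4) ^ 2) * h32 + ((m3 * m4 / 4) ^ 2) * h22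
  have hval : EU b0 b1 b2 M ((Real.sqrt 3 * m3 * m4 / 4 : ℝ) : ℂ) ((m3 ^ 2 / 2 : ℝ) : ℂ)
      ((-(Real.sqrt 2 * m3 * m4 / 4) : ℝ) : ℂ) ((m4 ^ 2 / 2 : ℝ) : ℂ)
      ((Real.sqrt 3 * m3 * m4 / 4 : ℝ) : ℂ) = (1 / 2) * (b0 + b1 * M ^ 2) := by
    unfold EU
    rw [htau, hdel]
    simp
  refine ⟨hmem, htau, hdel, ?_, hval⟩
  intro z2 z1 z0 zm1 zm2 _
  rw [hval]
  unfold EU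
  have h1 : 0 ≤ b1 * ‖tauC z2 z1 z0 zm1 zm2‖ ^ 2 := by positivity
  have h2 : 0 ≤ (b2 / 5) * ‖deltaC z2 z1 z0 zm1 zm2‖ ^ 2 := by positivity
  linarith
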